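/- A nontrivial Puiseux monoid H is a valuation monoid if and only if it is seminormal. -/

import Mathlib

lemma puiseux_rep_lemma (p q : ℕ) (hp : 0 < p) (hc : Nat.Coprime q p) (m : ℕ)
    (hm : p * q ≤ m) : ∃ s t : ℕ, m = s * p + t * q := by
  haveI : NeZero p := ⟨hp.ne'⟩
  set t : ℕ := ((m : ZMod p) * (q : ZMod p)⁻¹).val with ht
  have htlt : t < p := ZMod.val_lt _
  have htq : t * q ≤ m := by
    calc t * q ≤ (p - 1) * q := Nat.mul_le_mul_right _ (by omega)
    _ ≤ p * q := Nat.mul_le_mul_right _ (by omega)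
    _ ≤ m := hm
  have hunit : IsUnit (q : ZMod p) := (ZMod.isUnit_iff_coprime q p).mpr hc
  have hmod : ((t * q : ℕ) : ZMod p) = (m : ZMod p) := by
    push_cast
    rw [ZMod.natCast_val, ZMod.cast_id, mul_assoc, ZMod.inv_mul_of_unit _ hunit, mul_one]
  have hdvd : p ∣ m - t * q := by
    have := (ZMod.natCast_eq_natCast_iff _ _ _).mp hmod
    exact (Nat.modEq_iff_dvd' htq).mp this
  obtain ⟨s, hs⟩ := hdvd
  refine ⟨s, t, ?_⟩
  rw [mul_comm s p]
  omega

lemma puiseux_sub_mem (H : AddSubmonoid ℚ) (hpos : ∀ x ∈ H, 0 ≤ x)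
    (hsemi : ∀ x ∈ (AddSubgroup.closure (H : Set ℚ) : Set ℚ),
      (∃ N : ℕ, ∀ m : ℕ, N ≤ m → (m : ℚ) * x ∈ H) → x ∈ H)
    {a b : ℚ} (ha : a ∈ H) (hb : b ∈ H) (hba : b ≤ a) : a - b ∈ H := by
  rcases eq_or_lt_of_le hba with rfl | hlt
  · simpa using H.zero_mem
  rcases eq_or_lt_of_le (hpos b hb) with hb0 | hb0
  · simpa [← hb0] using ha
  -- now 0 < b < a
  have ha0 : 0 < a := hb0.trans hlt
  set r : ℚ := a / b with hr
  have hr1 : 1 < r := (one_lt_div hb0).mpr hlt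
  have hrnum : 0 < r.num := Rat.num_pos.mpr (by linarith)
  set p : ℕ := r.num.natAbs with hpdef
  set q : ℕ := r.den with hqdef
  have hp : 0 < p := Int.natAbs_pos.mpr hrnum.ne'
  have hq : 0 < q := r.pos
  have hpq : (p : ℚ) = (r.num : ℚ) := by
    rw [hpdef, Nat.cast_natAbs, abs_of_pos (by exact_mod_cast hrnum)]
  have hcop : Nat.Coprime q p := (r.reduced).symm
  -- key identity : q * a = p * b
  have hkey : (q : ℚ) * a = (p : ℚ) * b := by
    have h1 : ((r.num : ℚ) / (q : ℚ)) = r := Rat.num_div_den r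
    have hq0 : (q : ℚ) ≠ 0 := by positivity
    have hb0' : b ≠ 0 := hb0.ne'
    rw [hpq]
    field_simp [hr] at h1 ⊢
    rw [h1, hr, mul_assoc, div_mul_cancel₀ a hb0']
  have hqp : q < p := by
    have : (q : ℚ) * b < (q : ℚ) * a := by
      have : (0:ℚ) < q := by positivity
      exact mul_lt_mul_of_pos_left hlt this
    rw [hkey] at this
    have : (q : ℚ) < (p : ℚ) := lt_of_mul_lt_mul_right (by linarith [mul_comm (q:ℚ) b, mul_comm (p:ℚ) b]) hb0.le
    exact_mod_cast this
  set k : ℕ := p - q with hk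
  have hkcast : (k : ℚ) = (p : ℚ) - (q : ℚ) := by
    rw [hk]; push_cast [Nat.cast_sub hqp.le]; ring
  set x : ℚ := a - b with hx
  have hpx : (p : ℚ) * x ∈ H := by
    have : (p : ℚ) * x = (k : ℚ) * a := by rw [hkcast, hx]; linarith [hkey]
    rw [this, ← nsmul_eq_mul]
    exact AddSubmonoid.nsmul_mem H ha k
  have hqx : (q : ℚ) * x ∈ H := by
    have : (q : ℚ) * x = (k : ℚ) * b := by rw [hkcast, hx]; linarith [hkey]
    rw [this, ← nsmul_eq_mul]
    exact AddSubmonoid.nsmul_mem H hb k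
  have hxcl : x ∈ (AddSubgroup.closure (H : Set ℚ) : Set ℚ) := by
    exact sub_mem (AddSubgroup.subset_closure ha) (AddSubgroup.subset_closure hb)
  refine hsemi x hxcl ⟨p * q, fun m hm => ?_⟩
  obtain ⟨s, t, rfl⟩ := puiseux_rep_lemma p q hp hcop m hm
  have : ((s * p + t * q : ℕ) : ℚ) * x = s • ((p : ℚ) * x) + t • ((q : ℚ) * x) := by
    push_cast [nsmul_eq_mul]
    ring
  rw [this]
  exact add_mem (AddSubmonoid.nsmul_mem H hpx s) (AddSubmonoid.nsmul_mem H hqx t)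

/-- A nontrivial Puiseux monoid is a valuation monoid iff it is seminormal. -/
theorem puiseux_valuation_iff_seminormal (H : AddSubmonoid ℚ)
    (hpos : ∀ x ∈ H, 0 ≤ x) (hnt : ∃ x ∈ H, x ≠ 0) :
    (∀ a ∈ H, ∀ b ∈ H, (∃ h ∈ H, a = b + h) ∨ (∃ h ∈ H, b = a + h)) ↔
    (∀ x ∈ (AddSubgroup.closure (H : Set ℚ) : Set ℚ),
      (∃ N : ℕ, ∀ m : ℕ, N ≤ m → (m : ℚ) * x ∈ H) → x ∈ H) := by
  constructor
  · intro hval x hx hN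
    obtain ⟨N, hN⟩ := hN
    -- every element of the closure is a difference of elements of H
    let T : AddSubgroup ℚ :=
      { carrier := {y | ∃ a ∈ H, ∃ b ∈ H, y = a - b}
        zero_mem' := ⟨0, H.zero_mem, 0, H.zero_mem, by ring⟩
        add_mem' := by
          rintro y z ⟨a, ha, b, hb, rfl⟩ ⟨c, hc, d, hd, rfl⟩
          exact ⟨a + c, add_mem ha hc, b + d, add_mem hb hd, by ring⟩
        neg_mem' := by
          rintro y ⟨a, ha, b, hb, rfl⟩
          exact ⟨b, hb, a, ha, by ring⟩ }
    have hle : AddSubgroup.closure (H : Set ℚ) ≤ T :=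
      (AddSubgroup.closure_le T).mpr (fun a ha => ⟨a, ha, 0, H.zero_mem, by ring⟩)
    obtain ⟨a, ha, b, hb, rfl⟩ := hle hx
    -- a - b is nonnegative
    have hx0 : 0 ≤ a - b := by
      by_contra hneg
      push_neg at hneg
      have hm := hN (max N 1) (le_max_left _ _)
      have hmpos : (0:ℚ) < ((max N 1 : ℕ) : ℚ) := by
        have : (1:ℕ) ≤ max N 1 := le_max_right _ _
        exact_mod_cast Nat.lt_of_lt_of_le Nat.zero_lt_one this
      have := hpos _ hm
      nlinarith
    rcases hval a ha b hb with ⟨h, hh, rfl⟩ | ⟨h, hh, rfl⟩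
    · simpa using hh
    · have hh0 : 0 ≤ h := hpos h hh
      have : h = 0 := by
        have : a - (a + h) = -h := by ring
        rw [this] at hx0
        linarith
      rw [this]
      simpa using H.zero_mem
  · intro hsemi a ha b hb
    rcases le_total b a with hba | hab
    · exact Or.inl ⟨a - b, puiseux_sub_mem H hpos hsemi ha hb hba, by ring⟩
    · exact Or.inr ⟨b - a, puiseux_sub_mem H hpos hsemi hb ha hab, by ring⟩
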